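/- Let φ(k)² = 3 + 2cos(k·v₁) + 2cos(k·v₂) + 2cos(k·(v₁−v₂)) with v₁ = (√3/2,1/2), v₂ = (√3/2,−1/2), and K⋆ = (0, 4π/3). Then as k → 0, φ(K⋆+k)² = (3/4)|k|² + (3√3/8)k₁²k₂ − (√3/8)k₂³ − (3/64)|k|⁴ + O(|k|⁵). -/

import Mathlib

open Real Asymptotics Filter Topology

noncomputable def phiSqDirac (k : ℝ × ℝ) : ℝ :=
  3 + 2 * Real.cos ((Real.sqrt 3 * k.1 + k.2) / 2 + 2 * π / 3)
    + 2 * Real.cos ((Real.sqrt 3 * k.1 - k.2) / 2 - 2 * π / 3)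
    + 2 * Real.cos (k.2 + 4 * π / 3)

lemma cos_taylor4 (x : ℝ) (hx : |x| ≤ 1) :
    |Real.cos x - (1 - x ^ 2 / 2 + x ^ 4 / 24)| ≤ |x| ^ 5 := by
  have hsum : (∑ m ∈ Finset.range 6, (x * Complex.I) ^ m / m.factorial) +
      ∑ m ∈ Finset.range 6, (-x * Complex.I) ^ m / m.factorial
      = 2 * ((1 : ℂ) - x ^ 2 / 2 + x ^ 4 / 24) := by
    simp only [Finset.sum_range_succ, Finset.range_zero, Finset.sum_empty, Nat.factorial]
    push_cast
    apply Complex.ext <;> simp [Complex.ext_iff, pow_succ, Complex.div_re, Complex.div_im,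
      Complex.normSq] <;> ring
  have h1 : ‖Complex.exp (x * Complex.I)
      - ∑ m ∈ Finset.range 6, (x * Complex.I) ^ m / m.factorial‖
      ≤ ‖x * Complex.I‖ ^ 6 * ((Nat.succ 6 : ℝ) * ((Nat.factorial 6 : ℝ) * (6 : ℕ))⁻¹) :=
    Complex.exp_bound (by simpa) (by norm_num)
  have h2 : ‖Complex.exp (-x * Complex.I)
      - ∑ m ∈ Finset.range 6, (-x * Complex.I) ^ m / m.factorial‖
      ≤ ‖-x * Complex.I‖ ^ 6 * ((Nat.succ 6 : ℝ) * ((Nat.factorial 6 : ℝ) * (6 : ℕ))⁻¹) :=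
    Complex.exp_bound (by simpa) (by norm_num)
  have hre : |Real.cos x - (1 - x ^ 2 / 2 + x ^ 4 / 24)|
      = ‖Complex.cos x - ((1 : ℂ) - x ^ 2 / 2 + x ^ 4 / 24)‖ := by
    rw [← Real.norm_eq_abs, ← Complex.norm_real]; push_cast [Complex.ofReal_cos]; ring_nf
  rw [hre]
  have hcos : Complex.cos x - ((1 : ℂ) - x ^ 2 / 2 + x ^ 4 / 24)
      = ((Complex.exp (x * Complex.I) - ∑ m ∈ Finset.range 6, (x * Complex.I) ^ m / m.factorial)
        + (Complex.exp (-x * Complex.I) - ∑ m ∈ Finset.range 6, (-x * Complex.I) ^ m / m.factorial)) / 2 := by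
    simp only [Complex.cos]
    linear_combination hsum / 2
  rw [hcos]
  have habs : ‖x * Complex.I‖ = |x| := by simp
  calc ‖_‖ ≤ (‖Complex.exp (x * Complex.I)
      - ∑ m ∈ Finset.range 6, (x * Complex.I) ^ m / m.factorial‖
      + ‖Complex.exp (-x * Complex.I)
      - ∑ m ∈ Finset.range 6, (-x * Complex.I) ^ m / m.factorial‖) / 2 := by
        rw [norm_div]
        gcongr
        · exact norm_add_le _ _
        · simp
    _ ≤ (|x| ^ 6 * ((Nat.succ 6 : ℝ) * ((Nat.factorial 6 : ℝ) * (6 : ℕ))⁻¹)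
        + |x| ^ 6 * ((Nat.succ 6 : ℝ) * ((Nat.factorial 6 : ℝ) * (6 : ℕ))⁻¹)) / 2 := by
        simp only [habs] at h1 h2 ⊢
        have : ‖-↑x * Complex.I‖ = |x| := by simp
        rw [this] at h2
        linarith
    _ ≤ |x| ^ 5 := by
        have h6 : |x| ^ 6 ≤ |x| ^ 5 := pow_le_pow_of_le_one (abs_nonneg x) hx (by norm_num)
        have h5 : (0:ℝ) ≤ |x| ^ 6 := by positivity
        norm_num [Nat.factorial]
        nlinarith

lemma sin_taylor3 (x : ℝ) (hx : |x| ≤ 1) :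
    |Real.sin x - (x - x ^ 3 / 6)| ≤ |x| ^ 5 := by
  have hsum : (∑ m ∈ Finset.range 5, (-x * Complex.I) ^ m / m.factorial) -
      ∑ m ∈ Finset.range 5, (x * Complex.I) ^ m / m.factorial
      = ((x : ℂ) ^ 3 / 3 - 2 * x) * Complex.I := by
    simp only [Finset.sum_range_succ, Finset.range_zero, Finset.sum_empty, Nat.factorial]
    push_cast
    apply Complex.ext <;> simp [Complex.ext_iff, pow_succ, Complex.div_re, Complex.div_im,
      Complex.normSq] <;> ring
  have h1 : ‖Complex.exp (x * Complex.I)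
      - ∑ m ∈ Finset.range 5, (x * Complex.I) ^ m / m.factorial‖
      ≤ ‖x * Complex.I‖ ^ 5 * ((Nat.succ 5 : ℝ) * ((Nat.factorial 5 : ℝ) * (5 : ℕ))⁻¹) :=
    Complex.exp_bound (by simpa) (by norm_num)
  have h2 : ‖Complex.exp (-x * Complex.I)
      - ∑ m ∈ Finset.range 5, (-x * Complex.I) ^ m / m.factorial‖
      ≤ ‖-x * Complex.I‖ ^ 5 * ((Nat.succ 5 : ℝ) * ((Nat.factorial 5 : ℝ) * (5 : ℕ))⁻¹) :=
    Complex.exp_bound (by simpa) (by norm_num)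
  have hre : |Real.sin x - (x - x ^ 3 / 6)|
      = ‖Complex.sin x - ((x : ℂ) - x ^ 3 / 6)‖ := by
    rw [← Real.norm_eq_abs, ← Complex.norm_real]; push_cast [Complex.ofReal_sin]; ring_nf
  rw [hre]
  have hsin : Complex.sin x - ((x : ℂ) - x ^ 3 / 6)
      = ((Complex.exp (-x * Complex.I) - ∑ m ∈ Finset.range 5, (-x * Complex.I) ^ m / m.factorial)
        - (Complex.exp (x * Complex.I) - ∑ m ∈ Finset.range 5, (x * Complex.I) ^ m / m.factorial))
        * Complex.I / 2 := by
    simp only [Complex.sin]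
    linear_combination hsum * Complex.I / 2 + ((x : ℂ) ^ 3 / 3 - 2 * x) / 2 * Complex.I_sq
  rw [hsin]
  have habs : ‖x * Complex.I‖ = |x| := by simp
  have habs' : ‖-x * Complex.I‖ = |x| := by simp
  calc ‖_‖ ≤ (‖Complex.exp (-x * Complex.I)
      - ∑ m ∈ Finset.range 5, (-x * Complex.I) ^ m / m.factorial‖
      + ‖Complex.exp (x * Complex.I)
      - ∑ m ∈ Finset.range 5, (x * Complex.I) ^ m / m.factorial‖) / 2 := by
        rw [norm_div, norm_mul]
        simp only [Complex.norm_I, mul_one, Complex.norm_two]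
        gcongr
        simpa using norm_sub_le (Complex.exp (-x * Complex.I)
          - ∑ m ∈ Finset.range 5, (-x * Complex.I) ^ m / m.factorial)
          (Complex.exp (x * Complex.I) - ∑ m ∈ Finset.range 5, (x * Complex.I) ^ m / m.factorial)
    _ ≤ |x| ^ 5 := by
        rw [habs] at h1; rw [habs'] at h2
        have : ((Nat.succ 5 : ℝ) * ((Nat.factorial 5 : ℝ) * (5 : ℕ))⁻¹) = 1/100 := by
          norm_num [Nat.factorial]
        rw [this] at h1 h2
        have h5 : (0:ℝ) ≤ |x| ^ 5 := by positivity
        linarith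


set_option maxHeartbeats 1000000 in
theorem stmt_17 :
    (fun k : ℝ × ℝ =>
        phiSqDirac k -
          (3 / 4 * (k.1 ^ 2 + k.2 ^ 2) + 3 * Real.sqrt 3 / 8 * k.1 ^ 2 * k.2
            - Real.sqrt 3 / 8 * k.2 ^ 3 - 3 / 64 * (k.1 ^ 2 + k.2 ^ 2) ^ 2)) =O[𝓝 0]
      fun k : ℝ × ℝ => ‖k‖ ^ 5 := by
  rw [isBigO_iff]
  refine ⟨300, ?_⟩
  filter_upwards [Metric.ball_mem_nhds (0 : ℝ × ℝ) one_half_pos] with k hk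
  rw [Metric.mem_ball, dist_zero_right] at hk
  have h3 : Real.sqrt 3 ^ 2 = 3 := Real.sq_sqrt (by norm_num)
  have hs0 : 0 ≤ Real.sqrt 3 := Real.sqrt_nonneg 3
  have hs2 : Real.sqrt 3 ≤ 2 := by nlinarith
  have hk1 : |k.1| ≤ ‖k‖ := by simpa [Real.norm_eq_abs] using norm_fst_le k
  have hk2 : |k.2| ≤ ‖k‖ := by simpa [Real.norm_eq_abs] using norm_snd_le k
  have hn0 : (0:ℝ) ≤ ‖k‖ := norm_nonneg k
  -- bounds on the three angles
  have ha : |(Real.sqrt 3 * k.1 + k.2) / 2| ≤ 2 * ‖k‖ := by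
    have h1 : |Real.sqrt 3 * k.1| = Real.sqrt 3 * |k.1| := by
      rw [abs_mul, abs_of_nonneg hs0]
    have h2 := abs_add_le (Real.sqrt 3 * k.1) k.2
    rw [abs_div, show |(2:ℝ)| = 2 by norm_num]
    nlinarith [abs_nonneg k.1]
  have hb : |(Real.sqrt 3 * k.1 - k.2) / 2| ≤ 2 * ‖k‖ := by
    have h1 : |Real.sqrt 3 * k.1| = Real.sqrt 3 * |k.1| := by
      rw [abs_mul, abs_of_nonneg hs0]
    have h2 := abs_sub (Real.sqrt 3 * k.1) k.2
    rw [abs_div, show |(2:ℝ)| = 2 by norm_num]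
    nlinarith [abs_nonneg k.1]
  have hc : |k.2| ≤ 2 * ‖k‖ := by linarith
  have ha1 : |(Real.sqrt 3 * k.1 + k.2) / 2| ≤ 1 := by linarith
  have hb1 : |(Real.sqrt 3 * k.1 - k.2) / 2| ≤ 1 := by linarith
  have hc1 : |k.2| ≤ 1 := by linarith
  -- angle-addition rewrite of phiSqDirac
  have hc23 : Real.cos (2 * π / 3) = -(1/2) := by
    rw [show (2 * π / 3 : ℝ) = π - π/3 by ring, Real.cos_pi_sub, Real.cos_pi_div_three]
  have hs23 : Real.sin (2 * π / 3) = Real.sqrt 3 / 2 := by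
    rw [show (2 * π / 3 : ℝ) = π - π/3 by ring, Real.sin_pi_sub, Real.sin_pi_div_three]
  have hc43 : Real.cos (4 * π / 3) = -(1/2) := by
    rw [show (4 * π / 3 : ℝ) = π/3 + π by ring, Real.cos_add_pi, Real.cos_pi_div_three]
  have hs43 : Real.sin (4 * π / 3) = -(Real.sqrt 3 / 2) := by
    rw [show (4 * π / 3 : ℝ) = π/3 + π by ring, Real.sin_add_pi, Real.sin_pi_div_three]
  have hphi : phiSqDirac k =
      3 - (Real.cos ((Real.sqrt 3 * k.1 + k.2) / 2) + Real.cos ((Real.sqrt 3 * k.1 - k.2) / 2)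
          + Real.cos k.2)
        - Real.sqrt 3 * Real.sin ((Real.sqrt 3 * k.1 + k.2) / 2)
        + Real.sqrt 3 * Real.sin ((Real.sqrt 3 * k.1 - k.2) / 2)
        + Real.sqrt 3 * Real.sin k.2 := by
    simp only [phiSqDirac]
    rw [Real.cos_add _ (2 * π / 3), Real.cos_sub _ (2 * π / 3), Real.cos_add _ (4 * π / 3),
      hc23, hs23, hc43, hs43]
    ring
  -- key decomposition into Taylor remainders
  have key : phiSqDirac k -
      (3 / 4 * (k.1 ^ 2 + k.2 ^ 2) + 3 * Real.sqrt 3 / 8 * k.1 ^ 2 * k.2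
        - Real.sqrt 3 / 8 * k.2 ^ 3 - 3 / 64 * (k.1 ^ 2 + k.2 ^ 2) ^ 2)
      = -(Real.cos ((Real.sqrt 3 * k.1 + k.2) / 2)
            - (1 - ((Real.sqrt 3 * k.1 + k.2) / 2) ^ 2 / 2 + ((Real.sqrt 3 * k.1 + k.2) / 2) ^ 4 / 24))
        - (Real.cos ((Real.sqrt 3 * k.1 - k.2) / 2)
            - (1 - ((Real.sqrt 3 * k.1 - k.2) / 2) ^ 2 / 2 + ((Real.sqrt 3 * k.1 - k.2) / 2) ^ 4 / 24))
        - (Real.cos k.2 - (1 - k.2 ^ 2 / 2 + k.2 ^ 4 / 24))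
        - Real.sqrt 3 * (Real.sin ((Real.sqrt 3 * k.1 + k.2) / 2)
            - ((Real.sqrt 3 * k.1 + k.2) / 2 - ((Real.sqrt 3 * k.1 + k.2) / 2) ^ 3 / 6))
        + Real.sqrt 3 * (Real.sin ((Real.sqrt 3 * k.1 - k.2) / 2)
            - ((Real.sqrt 3 * k.1 - k.2) / 2 - ((Real.sqrt 3 * k.1 - k.2) / 2) ^ 3 / 6))
        + Real.sqrt 3 * (Real.sin k.2 - (k.2 - k.2 ^ 3 / 6)) := by
    rw [hphi]
    linear_combination (1/4 * k.1 ^ 2 - 1/32 * k.1 ^ 2 * k.2 ^ 2 - 1/64 * k.1 ^ 4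
      + 1/8 * Real.sqrt 3 * k.1 ^ 2 * k.2 - 1/192 * Real.sqrt 3 ^ 2 * k.1 ^ 4) * h3
  -- Taylor remainder bounds
  have p5 : ∀ x : ℝ, |x| ≤ 2 * ‖k‖ → |x| ^ 5 ≤ 32 * ‖k‖ ^ 5 := by
    intro x hx
    calc |x| ^ 5 ≤ (2 * ‖k‖) ^ 5 := pow_le_pow_left₀ (abs_nonneg x) hx 5
      _ = 32 * ‖k‖ ^ 5 := by ring
  have e1 := (cos_taylor4 _ ha1).trans (p5 _ ha)
  have e2 := (cos_taylor4 _ hb1).trans (p5 _ hb)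
  have e3 := (cos_taylor4 _ hc1).trans (p5 _ hc)
  have f1 := (sin_taylor3 _ ha1).trans (p5 _ ha)
  have f2 := (sin_taylor3 _ hb1).trans (p5 _ hb)
  have f3 := (sin_taylor3 _ hc1).trans (p5 _ hc)
  obtain ⟨e1l, e1u⟩ := abs_le.mp e1
  obtain ⟨e2l, e2u⟩ := abs_le.mp e2
  obtain ⟨e3l, e3u⟩ := abs_le.mp e3
  obtain ⟨f1l, f1u⟩ := abs_le.mp f1
  obtain ⟨f2l, f2u⟩ := abs_le.mp f2
  obtain ⟨f3l, f3u⟩ := abs_le.mp f3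
  have hnrm : ‖‖k‖ ^ 5‖ = ‖k‖ ^ 5 := by
    rw [Real.norm_eq_abs, abs_of_nonneg (by positivity)]
  rw [Real.norm_eq_abs, hnrm, key]
  rw [abs_le]
  have hX : Real.sqrt 3 * ‖k‖ ^ 5 ≤ 2 * ‖k‖ ^ 5 :=
    mul_le_mul_of_nonneg_right hs2 (pow_nonneg hn0 5)
  constructor <;>
    linarith [mul_le_mul_of_nonneg_left f1u hs0, mul_le_mul_of_nonneg_left f2u hs0,
      mul_le_mul_of_nonneg_left f3u hs0, mul_le_mul_of_nonneg_left f1l hs0,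
      mul_le_mul_of_nonneg_left f2l hs0, mul_le_mul_of_nonneg_left f3l hs0,
      pow_nonneg hn0 5]
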